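/- arXiv:0907.0931 — 4 statements merged into one kernel-verified Lean document; each statement's English description precedes it below -/
import Mathlib

section
/- Let A be a real m×n matrix with rank n and let aᵢ ∈ ℝⁿ denote the i-th row of A. On the open positive orthant, the function f(z) = log det(Aᵀ·diag(z)·A) is twice differentiable and its second partial derivative satisfies ∂²f/∂zᵢ∂zⱼ = −(aᵢᵀ·X·aⱼ)², i.e. the Hessian of f at z equals −(A·X·Aᵀ) ∘ (A·X·Aᵀ), the negated elementwise (Hadamard) square of A·X·Aᵀ, where X = (Aᵀ·diag(z)·A)⁻¹. -/
open Matrix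

namespace Stmt6Aux
attribute [local instance] Matrix.linftyOpNormedAddCommGroup Matrix.linftyOpNormedRing
  Matrix.linftyOpNormedAlgebra

variable {m n : ℕ} (A : Matrix (Fin m) (Fin n) ℝ)

lemma entry_eq (w : Fin m → ℝ) (p q : Fin n) :
    (Aᵀ * Matrix.diagonal w * A) p q = ∑ k, A k p * w k * A k q := by
  simp [Matrix.mul_apply, Matrix.diagonal_apply, mul_ite, ite_mul, mul_zero, zero_mul,
    Finset.sum_ite_eq, Finset.sum_ite_eq']

lemma contDiff_dS : ContDiff ℝ ⊤ fun w : Fin m → ℝ => (Aᵀ * Matrix.diagonal w * A).det := by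
  have h : (fun w : Fin m → ℝ => (Aᵀ * Matrix.diagonal w * A).det)
      = fun w => ∑ σ : Equiv.Perm (Fin n), ((Equiv.Perm.sign σ : ℤ) : ℝ) *
          ∏ p, (∑ k, A k (σ p) * w k * A k p) := by
    funext w
    rw [Matrix.det_apply]
    refine Finset.sum_congr rfl fun σ _ => ?_
    rw [Units.smul_def, zsmul_eq_mul]
    congr 1
    exact Finset.prod_congr rfl fun p _ => entry_eq A w (σ p) p
  rw [h]
  refine ContDiff.sum fun σ _ => contDiff_const.mul (contDiff_prod fun p _ => ?_)
  exact ContDiff.sum fun k _ =>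
    (contDiff_const.mul (ContinuousLinearMap.proj k : (Fin m → ℝ) →L[ℝ] ℝ).contDiff).mul
      contDiff_const

lemma det_ne (hA : A.rank = n) (z : Fin m → ℝ) (hz : ∀ j, 0 < z j) :
    (Aᵀ * Matrix.diagonal z * A).det ≠ 0 := by
  intro h
  obtain ⟨v, hv0, hv⟩ := (Matrix.exists_mulVec_eq_zero_iff).2 h
  set u := A *ᵥ v with hu
  have hq : v ⬝ᵥ ((Aᵀ * Matrix.diagonal z * A) *ᵥ v) = ∑ k, z k * u k ^ 2 := by
    rw [← Matrix.mulVec_mulVec, ← Matrix.mulVec_mulVec, Matrix.dotProduct_mulVec,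
      Matrix.vecMul_transpose]
    simp [Matrix.mulVec_diagonal, dotProduct, hu]
    exact Finset.sum_congr rfl fun k _ => by ring
  rw [hv] at hq
  simp only [dotProduct_zero] at hq
  have hz2 : ∀ k, z k * u k ^ 2 = 0 := by
    intro k
    have := (Finset.sum_eq_zero_iff_of_nonneg (fun k _ =>
      mul_nonneg (hz k).le (sq_nonneg _))).1 hq.symm k (Finset.mem_univ k)
    exact this
  have hu0 : u = 0 := by
    funext k
    have := hz2 k
    have hzk := (hz k).ne'
    have : u k ^ 2 = 0 := by
      rcases mul_eq_zero.1 this with h | h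
      · exact absurd h hzk
      · exact h
    simpa [pow_eq_zero_iff] using this
  -- injectivity from rank
  have hker : LinearMap.ker A.mulVecLin = ⊥ := by
    have h1 := LinearMap.finrank_range_add_finrank_ker A.mulVecLin
    rw [Module.finrank_pi, Fintype.card_fin] at h1
    have : Module.finrank ℝ (LinearMap.range A.mulVecLin) = n := hA
    have h2 : Module.finrank ℝ (LinearMap.ker A.mulVecLin) = 0 := by omega
    exact Submodule.finrank_eq_zero.1 h2
  have : v ∈ LinearMap.ker A.mulVecLin := by
    simpa [Matrix.mulVecLin_apply] using hu0
  rw [hker] at this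
  exact hv0 (by simpa using this)


noncomputable def SL : (Fin m → ℝ) →L[ℝ] Matrix (Fin n) (Fin n) ℝ :=
  LinearMap.toContinuousLinearMap
    { toFun := fun w => Aᵀ * Matrix.diagonal w * A
      map_add' := fun x y => by
        ext p q
        simp [entry_eq, mul_add, add_mul, Finset.sum_add_distrib]
      map_smul' := fun c x => by
        ext p q
        simp only [entry_eq, RingHom.id_apply, Matrix.smul_apply, smul_eq_mul, Finset.mul_sum,
          Pi.smul_apply]
        exact Finset.sum_congr rfl fun k _ => by ring }

@[simp] lemma SL_apply (w : Fin m → ℝ) : SL A w = Aᵀ * Matrix.diagonal w * A := rfl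

noncomputable def EV (a : Fin n → ℝ) : Matrix (Fin n) (Fin n) ℝ →L[ℝ] ℝ :=
  LinearMap.toContinuousLinearMap
    { toFun := fun M => a ⬝ᵥ (M *ᵥ a)
      map_add' := fun M N => by simp [Matrix.add_mulVec]
      map_smul' := fun c M => by simp [Matrix.smul_mulVec] }

@[simp] lemma EV_apply (a : Fin n → ℝ) (M : Matrix (Fin n) (Fin n) ℝ) :
    EV a M = a ⬝ᵥ (M *ᵥ a) := rfl

lemma Hentry (i : Fin m) (p q : Fin n) :
    (Aᵀ * Matrix.diagonal (Pi.single i (1:ℝ)) * A) p q = A i p * A i q := by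
  rw [entry_eq]
  simp [Pi.single_apply, mul_ite, ite_mul, Finset.sum_ite_eq]

lemma Hcol (i : Fin m) :
    Aᵀ * Matrix.diagonal (Pi.single i (1:ℝ)) * A
      = Matrix.replicateCol (Fin 1) (fun p => A i p) * Matrix.replicateRow (Fin 1) (fun q => A i q) := by
  ext p q
  rw [Hentry]
  simp [Matrix.mul_apply]

lemma det_line (M : Matrix (Fin n) (Fin n) ℝ) (hM : M.det ≠ 0) (a : Fin n → ℝ) (t : ℝ) :
    (M + t • (Matrix.replicateCol (Fin 1) a * Matrix.replicateRow (Fin 1) a)).det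
      = M.det + (M.det * (a ⬝ᵥ (M⁻¹ *ᵥ a))) * t := by
  have h1 : t • (Matrix.replicateCol (Fin 1) a * Matrix.replicateRow (Fin 1) a)
      = Matrix.replicateCol (Fin 1) a * Matrix.replicateRow (Fin 1) (t • a) := by
    ext p q
    simp [Matrix.mul_apply, mul_comm, mul_left_comm]
  rw [h1]; erw [Matrix.det_add_replicateCol_mul_replicateRow (ι := Fin 1) (isUnit_iff_ne_zero.mpr hM)]
  simp only [Matrix.det_unique, Matrix.add_apply, Matrix.one_apply_eq, Matrix.mul_apply,
    Matrix.replicateRow_apply, Matrix.replicateCol_apply, Pi.smul_apply, smul_eq_mul, dotProduct, Matrix.mulVec,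
    Finset.mul_sum, Finset.sum_mul, mul_add, mul_one]
  congr 1
  rw [Finset.sum_comm]
  exact Finset.sum_congr rfl fun p _ => Finset.sum_congr rfl fun q _ => by ring


lemma contDiffAt_f (w : Fin m → ℝ) (hw : (Aᵀ * Matrix.diagonal w * A).det ≠ 0) :
    ContDiffAt ℝ 2 (fun v : Fin m → ℝ => Real.log (Aᵀ * Matrix.diagonal v * A).det) w :=
  (Real.contDiffAt_log.mpr hw).comp w ((contDiff_dS A).of_le le_top).contDiffAt

set_option maxHeartbeats 2000000 in
lemma fderiv_f_eq (j : Fin m) (w : Fin m → ℝ) (hw : (Aᵀ * Matrix.diagonal w * A).det ≠ 0) :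
    fderiv ℝ (fun v : Fin m → ℝ => Real.log (Aᵀ * Matrix.diagonal v * A).det) w (Pi.single j 1)
      = (fun p => A j p) ⬝ᵥ ((Aᵀ * Matrix.diagonal w * A)⁻¹ *ᵥ fun p => A j p) := by
  have hdiff : DifferentiableAt ℝ
      (fun v : Fin m → ℝ => Real.log (Aᵀ * Matrix.diagonal v * A).det) w :=
    (contDiffAt_f A w hw).differentiableAt two_ne_zero
  have hdet : ∀ t : ℝ, (Aᵀ * Matrix.diagonal (w + t • (Pi.single j 1 : Fin m → ℝ)) * A).det
      = (Aᵀ * Matrix.diagonal w * A).det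
        + (Aᵀ * Matrix.diagonal w * A).det
            * ((fun p => A j p) ⬝ᵥ ((Aᵀ * Matrix.diagonal w * A)⁻¹ *ᵥ fun p => A j p)) * t := by
    intro t
    have hS : Aᵀ * Matrix.diagonal (w + t • (Pi.single j 1 : Fin m → ℝ)) * A
        = Aᵀ * Matrix.diagonal w * A + t • (Aᵀ * Matrix.diagonal ((Pi.single j 1 : Fin m → ℝ)) * A) := by
      have h1 := (SL A).map_add w (t • (Pi.single j 1 : Fin m → ℝ))
      have h2 := (SL A).map_smul t ((Pi.single j 1 : Fin m → ℝ))
      simp only [SL_apply] at h1 h2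
      rw [h1, h2]
    rw [hS, Hcol, det_line _ hw _ t]
  set d := (Aᵀ * Matrix.diagonal w * A).det with hdd
  set c := (fun p => A j p) ⬝ᵥ ((Aᵀ * Matrix.diagonal w * A)⁻¹ *ᵥ fun p => A j p) with hcc
  have hline : HasLineDerivAt ℝ
      (fun v : Fin m → ℝ => Real.log (Aᵀ * Matrix.diagonal v * A).det) c w (Pi.single j 1) := by
    have h0 : HasDerivAt (fun t : ℝ => d + d * c * t) (d * c) 0 := by
      simpa using ((hasDerivAt_id (0:ℝ)).const_mul (d * c)).const_add d
    have h2 : HasDerivAt (fun t : ℝ => Real.log (d + d * c * t)) c 0 := by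
      have h3 := h0.log (by simpa using hw)
      convert h3 using 1
      field_simp
      ring
    show HasDerivAt
      (fun t : ℝ => Real.log (Aᵀ * Matrix.diagonal (w + t • (Pi.single j 1 : Fin m → ℝ)) * A).det) c 0
    convert h2 using 2 with t
    rw [hdet t]
  rw [← hdiff.lineDeriv_eq_fderiv, hline.lineDeriv]

lemma quad (z : Fin m → ℝ) (i j : Fin m) :
    (fun p => A j p) ⬝ᵥ
      (((Aᵀ * Matrix.diagonal z * A)⁻¹ * (Aᵀ * Matrix.diagonal (Pi.single i (1:ℝ)) * A) *
          (Aᵀ * Matrix.diagonal z * A)⁻¹) *ᵥ fun p => A j p)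
      = ((A * (Aᵀ * Matrix.diagonal z * A)⁻¹ * Aᵀ) i j) ^ 2 := by
  set X := (Aᵀ * Matrix.diagonal z * A)⁻¹ with hX
  have hS : (Aᵀ * Matrix.diagonal z * A)ᵀ = Aᵀ * Matrix.diagonal z * A := by
    rw [Matrix.transpose_mul, Matrix.transpose_mul, Matrix.transpose_transpose,
      Matrix.diagonal_transpose, Matrix.mul_assoc]
  have h1 : Xᵀ = X := by rw [hX, Matrix.transpose_nonsing_inv, hS]
  have hsym : ∀ p q, X p q = X q p := fun p q => by
    conv_lhs => rw [← h1]
    rfl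
  have key : ∀ y : Fin n → ℝ, (Aᵀ * Matrix.diagonal (Pi.single i (1:ℝ)) * A) *ᵥ y
      = ((fun p => A i p) ⬝ᵥ y) • (fun p => A i p) := by
    intro y; funext p
    simp only [Matrix.mulVec, dotProduct, Hentry, Pi.smul_apply, smul_eq_mul, Finset.sum_mul]
    exact Finset.sum_congr rfl fun q _ => by ring
  rw [← Matrix.mulVec_mulVec, ← Matrix.mulVec_mulVec, key, Matrix.mulVec_smul]
  have hAB : (A * X * Aᵀ) i j = (fun p => A i p) ⬝ᵥ (X *ᵥ fun p => A j p) := by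
    simp only [Matrix.mul_apply, Matrix.transpose_apply, dotProduct, Matrix.mulVec,
      Finset.sum_mul, Finset.mul_sum]
    rw [Finset.sum_comm]
    exact Finset.sum_congr rfl fun p _ => Finset.sum_congr rfl fun q _ => by ring
  have hswap : (fun p => A j p) ⬝ᵥ (X *ᵥ fun p => A i p)
      = (fun p => A i p) ⬝ᵥ (X *ᵥ fun p => A j p) := by
    simp only [dotProduct, Matrix.mulVec, Finset.mul_sum]
    rw [Finset.sum_comm]
    exact Finset.sum_congr rfl fun p _ => Finset.sum_congr rfl fun q _ => by
      rw [hsym p q]; ring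
  rw [dotProduct_smul, smul_eq_mul, hswap, hAB]
  ring

lemma fderiv2 (hA : A.rank = n) (z : Fin m → ℝ) (hz : ∀ j, 0 < z j) (i j : Fin m) :
    fderiv ℝ
        (fun w : Fin m → ℝ =>
          fderiv ℝ (fun v : Fin m → ℝ =>
              Real.log (Aᵀ * Matrix.diagonal v * A).det) w (Pi.single j 1)) z
        (Pi.single i 1)
      = -((A * (Aᵀ * Matrix.diagonal z * A)⁻¹ * Aᵀ) i j) ^ 2 := by
  have hd := det_ne A hA z hz
  have hU : IsUnit (Aᵀ * Matrix.diagonal z * A) :=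
    (Matrix.isUnit_iff_isUnit_det _).mpr (isUnit_iff_ne_zero.mpr hd)
  have hopen : IsOpen {w : Fin m → ℝ | (Aᵀ * Matrix.diagonal w * A).det ≠ 0} :=
    IsOpen.preimage (contDiff_dS A).continuous isOpen_ne
  have hmem : {w : Fin m → ℝ | (Aᵀ * Matrix.diagonal w * A).det ≠ 0} ∈ nhds z :=
    hopen.mem_nhds hd
  have heq : (fun w : Fin m → ℝ =>
        fderiv ℝ (fun v : Fin m → ℝ =>
            Real.log (Aᵀ * Matrix.diagonal v * A).det) w (Pi.single j 1))
      =ᶠ[nhds z] fun w => EV (fun p => A j p) (Ring.inverse (SL A w)) := by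
    filter_upwards [hmem] with w hw
    rw [fderiv_f_eq A j w hw]
    simp [← Matrix.nonsing_inv_eq_ringInverse]
  rw [Filter.EventuallyEq.fderiv_eq heq]
  obtain ⟨u, hu⟩ := hU
  have hui : (↑u⁻¹ : Matrix (Fin n) (Fin n) ℝ) = (Aᵀ * Matrix.diagonal z * A)⁻¹ := by
    rw [Matrix.coe_units_inv, hu]
  have h1 : HasFDerivAt (Ring.inverse : Matrix (Fin n) (Fin n) ℝ → Matrix (Fin n) (Fin n) ℝ)
      (-(ContinuousLinearMap.mulLeftRight ℝ _ ((Aᵀ * Matrix.diagonal z * A)⁻¹)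
          ((Aᵀ * Matrix.diagonal z * A)⁻¹))) (SL A z) := by
    have h0 := hasFDerivAt_ringInverse (𝕜 := ℝ) u
    rw [hui, hu] at h0
    exact h0
  have hphi : HasFDerivAt (fun w : Fin m → ℝ => EV (fun p => A j p) (Ring.inverse (SL A w)))
      ((EV (fun p => A j p)).comp
        ((-(ContinuousLinearMap.mulLeftRight ℝ _ ((Aᵀ * Matrix.diagonal z * A)⁻¹)
            ((Aᵀ * Matrix.diagonal z * A)⁻¹))).comp (SL A))) z :=
    (EV (fun p => A j p)).hasFDerivAt.comp z (h1.comp z (SL A).hasFDerivAt)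
  rw [hphi.fderiv]
  change ((fun p => A j p) ⬝ᵥ
      ((-((Aᵀ * Matrix.diagonal z * A)⁻¹ * (Aᵀ * Matrix.diagonal (Pi.single i (1:ℝ)) * A) *
          (Aᵀ * Matrix.diagonal z * A)⁻¹)) *ᵥ fun p => A j p)) = _
  rw [Matrix.neg_mulVec, dotProduct_neg]
  rw [quad A z i j]

end Stmt6Aux


theorem stmt_6 {m n : ℕ} (A : Matrix (Fin m) (Fin n) ℝ) (hA : A.rank = n)
    (z : Fin m → ℝ) (hz : ∀ j, 0 < z j) :
    ContDiffAt ℝ 2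
        (fun w : Fin m → ℝ => Real.log (Aᵀ * Matrix.diagonal w * A).det) z ∧
      ∀ i j : Fin m,
        fderiv ℝ
            (fun w : Fin m → ℝ =>
              fderiv ℝ (fun v : Fin m → ℝ =>
                  Real.log (Aᵀ * Matrix.diagonal v * A).det) w (Pi.single j 1)) z
            (Pi.single i 1) =
          -((A * (Aᵀ * Matrix.diagonal z * A)⁻¹ * Aᵀ) i j) ^ 2 := by
  refine ⟨Stmt6Aux.contDiffAt_f A z (Stmt6Aux.det_ne A hA z hz), fun i j => ?_⟩
  exact Stmt6Aux.fderiv2 A hA z hz i j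
end

section
/- Let A be a real m×n matrix with rank n. The function z ↦ log det(Aᵀ·diag(z)·A) is concave on the open positive orthant: for all z, w ∈ ℝᵐ with all entries strictly positive and all t ∈ [0,1], log det(Aᵀ·diag(t·z + (1−t)·w)·A) ≥ t·log det(Aᵀ·diag(z)·A) + (1−t)·log det(Aᵀ·diag(w)·A). -/
open Matrix Finset

-- conjugation preserves posdef when B has injective mulVec
lemma aux_posDef_conj {k l : ℕ} {P : Matrix (Fin k) (Fin k) ℝ} (hP : P.PosDef)
    (B : Matrix (Fin k) (Fin l) ℝ) (hB : Function.Injective B.mulVec) :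
    (Bᵀ * P * B).PosDef := by
  refine Matrix.PosDef.of_dotProduct_mulVec_pos ?_ ?_
  · have h := Matrix.isHermitian_mul_mul_conjTranspose Bᵀ hP.1
    rwa [conjTranspose_eq_transpose_of_trivial, transpose_transpose] at h
  · intro x hx
    have hBx : B *ᵥ x ≠ 0 := by
      intro h
      exact hx (hB (h.trans (Matrix.mulVec_zero B).symm))
    have := hP.dotProduct_mulVec_pos hBx
    simpa [← Matrix.mulVec_mulVec, Matrix.dotProduct_mulVec, Matrix.vecMul_transpose,
      Matrix.mul_assoc] using this

lemma aux_core {k : ℕ} {M : Matrix (Fin k) (Fin k) ℝ} (hM : M.PosDef)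
    {t : ℝ} (ht : t ∈ Set.Icc (0:ℝ) 1) :
    0 < (t • M + (1 - t) • (1 : Matrix (Fin k) (Fin k) ℝ)).det ∧
      t * Real.log M.det ≤ Real.log (t • M + (1 - t) • (1 : Matrix (Fin k) (Fin k) ℝ)).det := by
  obtain ⟨ht0, ht1⟩ := ht
  have hH := hM.1
  set U : Matrix (Fin k) (Fin k) ℝ := (IsHermitian.eigenvectorUnitary hH : Matrix (Fin k) (Fin k) ℝ) with hU
  have hUmem := (IsHermitian.eigenvectorUnitary hH).2
  have hUU : U * star U = 1 := (Matrix.mem_unitaryGroup_iff).mp hUmem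
  set ev : Fin k → ℝ := hH.eigenvalues with hev
  have hspec : M = U * diagonal ev * star U := by
    have := hH.spectral_theorem
    simpa [RCLike.ofReal_real_eq_id] using this
  have hpos : ∀ i, 0 < t * ev i + (1 - t) := by
    intro i
    have := hM.eigenvalues_pos i
    rcases eq_or_lt_of_le ht0 with h | h
    · rw [← h]; norm_num
    · have : 0 < t * ev i := mul_pos h this
      linarith
  have hcomb : t • M + (1 - t) • (1 : Matrix (Fin k) (Fin k) ℝ)
      = U * diagonal (fun i => t * ev i + (1 - t)) * star U := by
    have h1 : (1 : Matrix (Fin k) (Fin k) ℝ) = U * 1 * star U := by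
      rw [Matrix.mul_one, hUU]
    calc t • M + (1 - t) • (1 : Matrix (Fin k) (Fin k) ℝ)
        = U * (t • diagonal ev + (1 - t) • 1) * star U := by
          rw [hspec]
          conv_lhs => rw [h1]
          simp [Matrix.mul_add, Matrix.add_mul, mul_smul_comm, smul_mul_assoc,
            hspec]
      _ = _ := by
          congr 1
          congr 1
          rw [← diagonal_one, ← diagonal_smul, ← diagonal_smul, diagonal_add]
          congr 1
          funext i
          simp
  have hdet : (t • M + (1 - t) • (1 : Matrix (Fin k) (Fin k) ℝ)).det
      = ∏ i, (t * ev i + (1 - t)) := by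
    rw [hcomb, Matrix.det_mul_right_comm, hUU, Matrix.one_mul, det_diagonal]
  have hdetM : M.det = ∏ i, ev i := by
    have := hH.det_eq_prod_eigenvalues
    simpa using this
  constructor
  · rw [hdet]; exact Finset.prod_pos fun i _ => hpos i
  · rw [hdet, hdetM, Real.log_prod (fun i _ => (hM.eigenvalues_pos i).ne'),
      Real.log_prod (fun i _ => (hpos i).ne'), Finset.mul_sum]
    apply Finset.sum_le_sum
    intro i _
    have hconc := (strictConcaveOn_log_Ioi.concaveOn).2 (Set.mem_Ioi.mpr (hM.eigenvalues_pos i))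
      (Set.mem_Ioi.mpr one_pos) ht0 (show (0:ℝ) ≤ 1 - t by linarith) (show t + (1 - t) = 1 by ring)
    simp only [smul_eq_mul, mul_one, Real.log_one, mul_zero, add_zero] at hconc
    exact hconc

open scoped MatrixOrder in
theorem stmt_8 {m n : ℕ} (A : Matrix (Fin m) (Fin n) ℝ) (hA : A.rank = n)
    (z w : Fin m → ℝ) (hz : ∀ i, 0 < z i) (hw : ∀ i, 0 < w i)
    (t : ℝ) (ht : t ∈ Set.Icc (0 : ℝ) 1) :
    t * Real.log (Aᵀ * Matrix.diagonal z * A).det +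
        (1 - t) * Real.log (Aᵀ * Matrix.diagonal w * A).det ≤
      Real.log (Aᵀ * Matrix.diagonal (t • z + (1 - t) • w) * A).det := by
  -- A has injective mulVec
  have hinj : Function.Injective A.mulVec := by
    rw [← Matrix.coe_mulVecLin]
    rw [← LinearMap.ker_eq_bot]
    have hrn : Module.finrank ℝ (LinearMap.range A.mulVecLin) = n := hA
    have h2 := LinearMap.finrank_range_add_finrank_ker A.mulVecLin
    rw [hrn, Module.finrank_fin_fun] at h2
    exact Submodule.finrank_eq_zero.mp (by omega)
  set P := Aᵀ * Matrix.diagonal z * A with hPdef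
  set Q := Aᵀ * Matrix.diagonal w * A with hQdef
  have hP : P.PosDef := aux_posDef_conj (Matrix.PosDef.diagonal hz) A hinj
  have hQ : Q.PosDef := aux_posDef_conj (Matrix.PosDef.diagonal hw) A hinj
  have hcombM : Aᵀ * Matrix.diagonal (t • z + (1 - t) • w) * A = t • P + (1 - t) • Q := by
    rw [hPdef, hQdef,
      show Matrix.diagonal (t • z + (1 - t) • w)
          = t • Matrix.diagonal z + (1 - t) • Matrix.diagonal w by
        rw [← diagonal_smul, ← diagonal_smul, diagonal_add]
        rfl]
    simp [Matrix.mul_add, Matrix.add_mul, mul_smul_comm, smul_mul_assoc]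
  rw [hcombM]
  -- square root of Q
  set S := CFC.sqrt Q with hSdef
  have hSS : S * S = Q := CFC.sqrt_mul_sqrt_self Q (Matrix.nonneg_iff_posSemidef.mpr hQ.posSemidef)
  have hdetS : S.det * S.det = Q.det := by rw [← Matrix.det_mul, hSS]
  have hQdet : 0 < Q.det := hQ.det_pos
  have hPdet : 0 < P.det := hP.det_pos
  have hdS : S.det ≠ 0 := by
    intro h; rw [h, mul_zero] at hdetS; exact hQdet.ne (hdetS)
  have hSym : Sᵀ = S := (Matrix.nonneg_iff_posSemidef.mp (CFC.sqrt_nonneg Q)).1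
  haveI : Invertible S := Matrix.invertibleOfIsUnitDet S hdS.isUnit
  have hSinv : (S⁻¹)ᵀ = S⁻¹ := by rw [Matrix.transpose_nonsing_inv, hSym]
  have hMinj : Function.Injective S⁻¹.mulVec := by
    haveI : Invertible (S⁻¹) :=
      ⟨S, Matrix.mul_inv_of_invertible S, Matrix.inv_mul_of_invertible S⟩
    exact Matrix.mulVec_injective_of_invertible _
  have hM : (S⁻¹ * P * S⁻¹).PosDef := by
    have := aux_posDef_conj hP (S⁻¹) hMinj
    rwa [hSinv] at this
  set M := S⁻¹ * P * S⁻¹ with hMdef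
  obtain ⟨hdpos, hcore⟩ := aux_core hM ht
  -- t•P + (1-t)•Q = S * (t•M + (1-t)•1) * S
  have hfact : t • P + (1 - t) • Q = S * (t • M + (1 - t) • (1 : Matrix (Fin n) (Fin n) ℝ)) * S := by
    have hSMS : S * M * S = P := by
      rw [hMdef]
      rw [show S * (S⁻¹ * P * S⁻¹) * S = (S * S⁻¹) * P * (S⁻¹ * S) by noncomm_ring]
      rw [Matrix.mul_inv_of_invertible, Matrix.inv_mul_of_invertible, Matrix.one_mul,
        Matrix.mul_one]
    calc t • P + (1 - t) • Q = t • (S * M * S) + (1 - t) • (S * 1 * S) := by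
          rw [hSMS, Matrix.mul_one, hSS]
      _ = _ := by
          simp [Matrix.mul_add, Matrix.add_mul, mul_smul_comm, smul_mul_assoc]
  rw [hfact]
  have hX := hdpos
  set X := t • M + (1 - t) • (1 : Matrix (Fin n) (Fin n) ℝ) with hXdef
  have hdetfact : (S * X * S).det = S.det * X.det * S.det := by
    rw [Matrix.det_mul, Matrix.det_mul]
  -- log computations
  have hlogSXS : Real.log (S * X * S).det = Real.log S.det + Real.log X.det + Real.log S.det := by
    rw [hdetfact, Real.log_mul (mul_ne_zero hdS hX.ne') hdS, Real.log_mul hdS hX.ne']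
  have hdetM : M.det = S.det⁻¹ * P.det * S.det⁻¹ := by
    rw [hMdef, Matrix.det_mul, Matrix.det_mul, Matrix.det_nonsing_inv, Ring.inverse_eq_inv']
  have hlogM : Real.log M.det = -Real.log S.det + Real.log P.det + -Real.log S.det := by
    rw [hdetM, Real.log_mul (mul_ne_zero (inv_ne_zero hdS) hPdet.ne') (inv_ne_zero hdS),
      Real.log_mul (inv_ne_zero hdS) hPdet.ne', Real.log_inv]
  have hlogQ : Real.log Q.det = Real.log S.det + Real.log S.det := by
    rw [← hdetS, Real.log_mul hdS hdS]
  rw [hlogSXS]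
  rw [hlogM] at hcore
  rw [hlogQ]
  nlinarith [hcore]
end

section
/- Let X be a real symmetric positive definite n×n matrix with n ≥ 1. Then log det X ≤ tr X − n, with equality if and only if X is the identity matrix. -/
open Matrix

lemma trace_eq_sum_eigs {n : ℕ} (X : Matrix (Fin n) (Fin n) ℝ)
    (h : X.IsHermitian) : X.trace = ∑ i, h.eigenvalues i := by
  conv_lhs => rw [h.spectral_theorem, Unitary.conjStarAlgAut_apply]
  rw [Matrix.trace_mul_cycle]
  have hU : (star (h.eigenvectorUnitary : Matrix (Fin n) (Fin n) ℝ)) *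
      (h.eigenvectorUnitary : Matrix (Fin n) (Fin n) ℝ) = 1 :=
    (Matrix.mem_unitaryGroup_iff').mp h.eigenvectorUnitary.2
  rw [hU, one_mul, Matrix.trace_diagonal]
  simp

theorem stmt_15 {n : ℕ} (hn : 1 ≤ n) (X : Matrix (Fin n) (Fin n) ℝ)
    (hX : X.PosDef) :
    Real.log X.det ≤ X.trace - (n : ℝ) ∧
      (Real.log X.det = X.trace - (n : ℝ) ↔ X = 1) := by
  have hH := hX.isHermitian
  have hev : ∀ i, 0 < hH.eigenvalues i := fun i => hX.eigenvalues_pos i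
  have hdet : X.det = ∏ i, hH.eigenvalues i := by
    rw [hH.det_eq_prod_eigenvalues]; norm_num
  have htr : X.trace = ∑ i, hH.eigenvalues i := trace_eq_sum_eigs X hH
  have hlog : Real.log X.det = ∑ i, Real.log (hH.eigenvalues i) := by
    rw [hdet, Real.log_prod]
    exact fun i _ => (hev i).ne'
  have hle : ∀ i, Real.log (hH.eigenvalues i) ≤ hH.eigenvalues i - 1 := fun i =>
    Real.log_le_sub_one_of_pos (hev i)
  have hsum : Real.log X.det ≤ X.trace - (n : ℝ) := by
    rw [hlog, htr]
    calc ∑ i, Real.log (hH.eigenvalues i) ≤ ∑ i, (hH.eigenvalues i - 1) :=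
          Finset.sum_le_sum fun i _ => hle i
      _ = (∑ i, hH.eigenvalues i) - n := by
          rw [Finset.sum_sub_distrib]; simp
  refine ⟨hsum, ?_, ?_⟩
  · intro heq
    have hall : ∀ i, hH.eigenvalues i = 1 := by
      by_contra hc
      push_neg at hc
      obtain ⟨j, hj⟩ := hc
      have hstrict : ∑ i, Real.log (hH.eigenvalues i) < ∑ i, (hH.eigenvalues i - 1) := by
        apply Finset.sum_lt_sum (fun i _ => hle i) ⟨j, Finset.mem_univ j, ?_⟩
        have := Real.add_one_lt_exp (x := Real.log (hH.eigenvalues j)) ?_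
        · rw [Real.exp_log (hev j)] at this; linarith
        · intro h0
          exact hj (by rw [← Real.exp_log (hev j), h0, Real.exp_zero])
      rw [hlog, htr] at heq
      rw [heq] at hstrict
      have : ∑ i, (hH.eigenvalues i - 1) = (∑ i, hH.eigenvalues i) - n := by
        rw [Finset.sum_sub_distrib]; simp
      rw [this] at hstrict
      exact lt_irrefl _ hstrict
    have hdiag : Matrix.diagonal (RCLike.ofReal ∘ hH.eigenvalues) = (1 : Matrix (Fin n) (Fin n) ℝ) := by
      ext i k
      by_cases h : i = k <;> simp [Matrix.diagonal_apply, Matrix.one_apply, h, hall]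
    have := hH.spectral_theorem
    rw [Unitary.conjStarAlgAut_apply] at this
    rw [hdiag, mul_one] at this
    rw [this, (Matrix.mem_unitaryGroup_iff).mp hH.eigenvectorUnitary.2]
  · intro h1
    subst h1
    simp [Matrix.trace_one]
end

section
/- (Weak duality between MVEE and the relaxed sensor selection problem) Let A be a real m×n matrix with rows aᵢ ∈ ℝⁿ. Let M be a real symmetric positive definite n×n matrix with aᵢᵀ·M·aᵢ ≤ 1 for all i (i.e. M is feasible for the minimum volume enclosing ellipsoid problem), and let z ∈ ℝᵐ satisfy zᵢ ≥ 0 for all i, Σᵢ zᵢ = n, and Aᵀ·diag(z)·A positive definite. Then log det(Aᵀ·diag(z)·A) ≤ −log det M; equivalently, det(M)·det(Aᵀ·diag(z)·A) ≤ 1. -/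
open Matrix

private lemma trace_eq_sum_eigs_s17 {n : ℕ} {Q : Matrix (Fin n) (Fin n) ℝ}
    (hQ : Q.IsHermitian) : Q.trace = ∑ i, hQ.eigenvalues i := by
  rw [hQ.trace_eq_sum_eigenvalues]
  simp

private lemma det_le_one_of_trace {n : ℕ} {Q : Matrix (Fin n) (Fin n) ℝ}
    (hQ : Q.PosSemidef) (htr : Q.trace ≤ (n : ℝ)) : Q.det ≤ 1 := by
  rcases Nat.eq_zero_or_pos n with h0 | hn
  · subst h0
    simp [Matrix.det_fin_zero]
  set lam := hQ.1.eigenvalues with hlam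
  have hdet : Q.det = ∏ i, lam i := by
    simpa using hQ.1.det_eq_prod_eigenvalues
  have hlnn : ∀ i, 0 ≤ lam i := hQ.eigenvalues_nonneg
  have hnR : (0:ℝ) < n := by exact_mod_cast hn
  have hgm := Real.geom_mean_le_arith_mean_weighted Finset.univ
      (fun _ => 1 / (n:ℝ)) lam
      (fun i _ => by positivity)
      (by simp [Finset.card_univ]; field_simp)
      (fun i _ => hlnn i)
  have hsum : ∑ i, (1 / (n:ℝ)) * lam i = Q.trace / n := by
    rw [trace_eq_sum_eigs_s17 hQ.1, Finset.sum_div]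
    exact Finset.sum_congr rfl fun i _ => by ring
  have hg1 : (∏ i, lam i ^ (1 / (n:ℝ))) ≤ 1 := by
    calc (∏ i, lam i ^ (1 / (n:ℝ))) ≤ ∑ i, (1 / (n:ℝ)) * lam i := hgm
    _ = Q.trace / n := hsum
    _ ≤ 1 := by rw [div_le_one hnR]; exact htr
  have hgnn : 0 ≤ ∏ i, lam i ^ (1 / (n:ℝ)) :=
    Finset.prod_nonneg fun i _ => Real.rpow_nonneg (hlnn i) _
  have hpow : (∏ i, lam i ^ (1 / (n:ℝ))) ^ n = ∏ i, lam i := by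
    rw [← Finset.prod_pow]
    refine Finset.prod_congr rfl fun i _ => ?_
    rw [← Real.rpow_natCast (lam i ^ (1 / (n:ℝ))) n, ← Real.rpow_mul (hlnn i)]
    rw [one_div_mul_cancel (ne_of_gt hnR), Real.rpow_one]
  calc Q.det = (∏ i, lam i ^ (1 / (n:ℝ))) ^ n := by rw [hpow, hdet]
  _ ≤ 1 ^ n := pow_le_pow_left₀ hgnn hg1 n
  _ = 1 := one_pow n

theorem stmt_17 {m n : ℕ} (A : Matrix (Fin m) (Fin n) ℝ)
    (M : Matrix (Fin n) (Fin n) ℝ) (hM : M.PosDef)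
    (hMfeas : ∀ i, A i ⬝ᵥ M *ᵥ A i ≤ 1)
    (z : Fin m → ℝ) (hz : ∀ i, 0 ≤ z i) (hsum : ∑ i, z i = (n : ℝ))
    (hP : (Aᵀ * Matrix.diagonal z * A).PosDef) :
    Real.log (Aᵀ * Matrix.diagonal z * A).det ≤ -Real.log M.det ∧
      M.det * (Aᵀ * Matrix.diagonal z * A).det ≤ 1 := by
  set P := Aᵀ * Matrix.diagonal z * A with hPdef
  open scoped MatrixOrder in
  set S := CFC.sqrt M with hSdef
  open scoped MatrixOrder in
  have hSS : S * S = M := CFC.sqrt_mul_sqrt_self M hM.posSemidef.nonneg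
  open scoped MatrixOrder in
  have hSH : Sᴴ = S := (CFC.sqrt_nonneg M).posSemidef.1
  -- Q = S P S is positive semidefinite
  have hQ : (S * P * S).PosSemidef := by
    have := hP.posSemidef.conjTranspose_mul_mul_same S
    rwa [hSH] at this
  -- det (S P S) = det M * det P
  have hdetQ : (S * P * S).det = M.det * P.det := by
    rw [Matrix.det_mul, Matrix.det_mul, ← hSS, Matrix.det_mul]; ring
  -- trace (S P S) = trace (P M)
  have htrQ : (S * P * S).trace = (P * M).trace := by
    rw [Matrix.trace_mul_comm, ← Matrix.mul_assoc, hSS, Matrix.trace_mul_comm]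
  have hBdiag : ∀ i, (A * M * Aᵀ) i i = A i ⬝ᵥ M *ᵥ A i := by
    intro i
    simp only [Matrix.mul_apply, Matrix.transpose_apply, dotProduct,
      Matrix.mulVec, dotProduct, Finset.sum_mul, Finset.mul_sum]
    rw [Finset.sum_comm]
    exact Finset.sum_congr rfl fun k _ => Finset.sum_congr rfl fun j _ => by ring
  -- trace (P M) = ∑ i, z i * (a_i ⬝ M a_i)
  have htrPM : (P * M).trace = ∑ i, z i * (A i ⬝ᵥ M *ᵥ A i) := by
    calc (P * M).trace = (Matrix.diagonal z * (A * M * Aᵀ)).trace := by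
          rw [hPdef, Matrix.mul_assoc, Matrix.mul_assoc, Matrix.trace_mul_comm,
            Matrix.mul_assoc]
    _ = ∑ i, z i * (A * M * Aᵀ) i i := by
          simp [Matrix.trace, Matrix.diag, Matrix.diagonal_mul]
    _ = ∑ i, z i * (A i ⬝ᵥ M *ᵥ A i) :=
          Finset.sum_congr rfl fun i _ => by rw [hBdiag i]
  have htr : (S * P * S).trace ≤ (n : ℝ) := by
    rw [htrQ, htrPM, ← hsum]
    refine Finset.sum_le_sum fun i _ => ?_
    calc z i * (A i ⬝ᵥ M *ᵥ A i) ≤ z i * 1 :=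
      mul_le_mul_of_nonneg_left (hMfeas i) (hz i)
    _ = z i := mul_one _
  have hdet1 : M.det * P.det ≤ 1 := by
    rw [← hdetQ]; exact det_le_one_of_trace hQ htr
  have hMd : 0 < M.det := hM.det_pos
  have hPd : 0 < P.det := hP.det_pos
  refine ⟨?_, hdet1⟩
  have hlog : Real.log (M.det * P.det) ≤ 0 :=
    Real.log_nonpos (le_of_lt (mul_pos hMd hPd)) hdet1
  rw [Real.log_mul (ne_of_gt hMd) (ne_of_gt hPd)] at hlog
  linarith
end
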